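/- arXiv:2009.12940 — 6 statements merged into one kernel-verified Lean document; each statement's English description precedes it below -/
import Mathlib

section
/- For nonzero x, x̃ ∈ ℝ³, the Frobenius inner product satisfies ⟨⟨σ(x), σ(x̃)⟩⟩ = |x|^{1+γ/2}|x̃|^{1+γ/2}(1 + (x·x̃)²/(|x|²|x̃|²)), and consequently ⟨⟨σ(x), σ(x̃)⟩⟩ ≥ 2|x|^{γ/2}|x̃|^{γ/2}(x·x̃). -/
noncomputable def norm3 (x : Fin 3 → ℝ) : ℝ := Real.sqrt (∑ i, (x i)^2)

noncomputable def dot3 (x y : Fin 3 → ℝ) : ℝ := ∑ i, x i * y i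

noncomputable def projM (x : Fin 3 → ℝ) : Matrix (Fin 3) (Fin 3) ℝ :=
  1 - (norm3 x ^ 2)⁻¹ • Matrix.of (fun i j => x i * x j)

noncomputable def sigmaM (γ : ℝ) (x : Fin 3 → ℝ) : Matrix (Fin 3) (Fin 3) ℝ :=
  norm3 x ^ (1 + γ/2) • projM x

noncomputable def frob2 (A : Matrix (Fin 3) (Fin 3) ℝ) : ℝ := Matrix.trace (A * A.transpose)

noncomputable def minner (A B : Matrix (Fin 3) (Fin 3) ℝ) : ℝ := Matrix.trace (A * B.transpose)

noncomputable def bfun (γ : ℝ) (x : Fin 3 → ℝ) : Fin 3 → ℝ := (-2 * norm3 x ^ γ) • x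

lemma norm3_pos (x : Fin 3 → ℝ) (hx : x ≠ 0) : 0 < norm3 x := by
  apply Real.sqrt_pos.2
  obtain ⟨i, hi⟩ := Function.ne_iff.1 hx
  have h1 : (0:ℝ) < x i ^ 2 := (sq_nonneg (x i)).lt_of_ne (Ne.symm (pow_ne_zero 2 hi))
  have h2 : x i ^ 2 ≤ ∑ j, x j ^ 2 :=
    Finset.single_le_sum (fun j _ => sq_nonneg (x j)) (Finset.mem_univ i)
  linarith

lemma norm3_sq (x : Fin 3 → ℝ) : norm3 x ^ 2 = ∑ i, x i ^ 2 :=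
  Real.sq_sqrt (Finset.sum_nonneg fun i _ => sq_nonneg (x i))

lemma minner_eq (A B : Matrix (Fin 3) (Fin 3) ℝ) :
    minner A B = ∑ i, ∑ j, A i j * B i j := by
  simp [minner, Matrix.trace, Matrix.mul_apply, Matrix.diag]

theorem stmt1 (γ : ℝ) (hγ : γ ∈ Set.Ioc (0:ℝ) 1) (x y : Fin 3 → ℝ) (hx : x ≠ 0) (hy : y ≠ 0) :
    minner (sigmaM γ x) (sigmaM γ y)
      = norm3 x ^ (1 + γ/2) * norm3 y ^ (1 + γ/2)
        * (1 + (dot3 x y)^2 / (norm3 x ^ 2 * norm3 y ^ 2))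
    ∧ 2 * norm3 x ^ (γ/2) * norm3 y ^ (γ/2) * dot3 x y
        ≤ minner (sigmaM γ x) (sigmaM γ y) := by
  have ha : 0 < norm3 x := norm3_pos x hx
  have hb : 0 < norm3 y := norm3_pos y hy
  have hAx := norm3_sq x
  have hAy := norm3_sq y
  rw [Fin.sum_univ_three] at hAx hAy
  have hA' : x 0 ^ 2 + x 1 ^ 2 + x 2 ^ 2 ≠ 0 := by
    rw [← hAx]; positivity
  have hB' : y 0 ^ 2 + y 1 ^ 2 + y 2 ^ 2 ≠ 0 := by
    rw [← hAy]; positivity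
  have key : minner (sigmaM γ x) (sigmaM γ y)
      = norm3 x ^ (1 + γ/2) * norm3 y ^ (1 + γ/2)
        * (1 + (dot3 x y)^2 / (norm3 x ^ 2 * norm3 y ^ 2)) := by
    rw [minner_eq]
    simp only [sigmaM, projM, Matrix.smul_apply, Matrix.sub_apply, Matrix.one_apply,
      Matrix.of_apply, smul_eq_mul, Fin.sum_univ_three, dot3, hAx, hAy]
    norm_num [Fin.ext_iff]
    field_simp
    ring
  refine ⟨key, ?_⟩
  rw [key]
  set D := dot3 x y with hD
  set a := norm3 x
  set b := norm3 y
  have hab : (0:ℝ) < a * b := mul_pos ha hb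
  have hp : a ^ (1 + γ/2) = a * a ^ (γ/2) := by
    rw [Real.rpow_add ha, Real.rpow_one]
  have hq : b ^ (1 + γ/2) = b * b ^ (γ/2) := by
    rw [Real.rpow_add hb, Real.rpow_one]
  have hc : (0:ℝ) < a ^ (γ/2) * b ^ (γ/2) :=
    mul_pos (Real.rpow_pos_of_pos ha _) (Real.rpow_pos_of_pos hb _)
  have key2 : 2 * D ≤ a * b * (1 + D^2 / (a^2 * b^2)) := by
    have h1 : a * b * (1 + D^2 / (a^2 * b^2)) - 2 * D = (a*b - D)^2 / (a*b) := by
      field_simp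
      ring
    nlinarith [div_nonneg (sq_nonneg (a*b - D)) hab.le]
  calc 2 * a ^ (γ/2) * b ^ (γ/2) * D
      = (a ^ (γ/2) * b ^ (γ/2)) * (2 * D) := by ring
    _ ≤ (a ^ (γ/2) * b ^ (γ/2)) * (a * b * (1 + D^2 / (a^2 * b^2))) :=
        mul_le_mul_of_nonneg_left key2 hc.le
    _ = a ^ (1 + γ/2) * b ^ (1 + γ/2) * (1 + D^2 / (a^2 * b^2)) := by
        rw [hp, hq]; ring
end

section
/- For nonzero x, x̃ ∈ ℝ³, the Frobenius norm of σ(x) - σ(x̃) satisfies ‖σ(x) - σ(x̃)‖² ≤ 2 | |x|^{γ/2} x - |x̃|^{γ/2} x̃ |². -/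
set_option maxHeartbeats 2000000 in
lemma frob_diff (a b : ℝ) (x y : Fin 3 → ℝ)
    (hx : (0:ℝ) < ∑ i, (x i)^2) (hy : (0:ℝ) < ∑ i, (y i)^2) :
    frob2 (a • projM x - b • projM y) =
      2*a^2 + 2*b^2 - 2*a*b - 2*a*b*(dot3 x y)^2 / ((∑ i, (x i)^2) * (∑ i, (y i)^2)) := by
  have hXs : norm3 x ^ 2 = ∑ i, (x i)^2 := Real.sq_sqrt (by positivity)
  have hYs : norm3 y ^ 2 = ∑ i, (y i)^2 := Real.sq_sqrt (by positivity)
  unfold frob2 projM dot3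
  rw [hXs, hYs]
  simp [Matrix.trace, Matrix.mul_apply, Matrix.transpose_apply, Matrix.sub_apply,
    Matrix.smul_apply, Matrix.one_apply, Matrix.of_apply, Fin.sum_univ_three,
    Matrix.diag]
  have h1 : x 0 ^ 2 + x 1 ^ 2 + x 2 ^ 2 ≠ 0 := by
    have := hx; rw [Fin.sum_univ_three] at this; linarith
  have h2 : y 0 ^ 2 + y 1 ^ 2 + y 2 ^ 2 ≠ 0 := by
    have := hy; rw [Fin.sum_univ_three] at this; linarith
  field_simp
  ring

lemma sum_sq_pos (x : Fin 3 → ℝ) (hx : x ≠ 0) : (0:ℝ) < ∑ i, (x i)^2 := by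
  obtain ⟨i, hi⟩ := Function.ne_iff.mp hx
  exact Finset.sum_pos' (fun j _ => sq_nonneg _) ⟨i, Finset.mem_univ i, by exact pow_pos (abs_pos.mpr hi) 2 |>.trans_le (by rw [sq_abs])⟩

theorem stmt4 (γ : ℝ) (hγ : γ ∈ Set.Ioc (0:ℝ) 1) (x y : Fin 3 → ℝ) (hx : x ≠ 0) (hy : y ≠ 0) :
    frob2 (sigmaM γ x - sigmaM γ y)
      ≤ 2 * norm3 ((norm3 x ^ (γ/2)) • x - (norm3 y ^ (γ/2)) • y) ^ 2 := by
  have hX : (0:ℝ) < ∑ i, (x i)^2 := sum_sq_pos x hx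
  have hY : (0:ℝ) < ∑ i, (y i)^2 := sum_sq_pos y hy
  set r := norm3 x with hrdef
  set s := norm3 y with hsdef
  have hr : 0 < r := Real.sqrt_pos.mpr hX
  have hs : 0 < s := Real.sqrt_pos.mpr hY
  have hr2 : r ^ 2 = ∑ i, (x i)^2 := Real.sq_sqrt hX.le
  have hs2 : s ^ 2 = ∑ i, (y i)^2 := Real.sq_sqrt hY.le
  set p := r ^ (γ/2) with hpdef
  set q := s ^ (γ/2) with hqdef
  have hp : 0 < p := Real.rpow_pos_of_pos hr _
  have hq : 0 < q := Real.rpow_pos_of_pos hs _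
  have ha : r ^ (1 + γ/2) = r * p := by
    rw [hpdef, Real.rpow_add hr, Real.rpow_one]
  have hb : s ^ (1 + γ/2) = s * q := by
    rw [hqdef, Real.rpow_add hs, Real.rpow_one]
  set d := dot3 x y with hddef
  -- LHS closed form
  have hL : frob2 (sigmaM γ x - sigmaM γ y)
      = 2*(r*p)^2 + 2*(s*q)^2 - 2*(r*p)*(s*q) - 2*(r*p)*(s*q)*d^2 / (r^2 * s^2) := by
    have := frob_diff (r ^ (1+γ/2)) (s ^ (1+γ/2)) x y hX hY
    unfold sigmaM
    rw [← hrdef, ← hsdef, this, ha, hb, hr2, hs2, hddef]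
  -- RHS closed form
  have hR : norm3 ((norm3 x ^ (γ/2)) • x - (norm3 y ^ (γ/2)) • y) ^ 2
      = p^2 * r^2 + q^2 * s^2 - 2*p*q*d := by
    rw [norm3, Real.sq_sqrt (by positivity)]
    simp only [Pi.sub_apply, Pi.smul_apply, smul_eq_mul, ← hrdef, ← hsdef, ← hpdef, ← hqdef]
    rw [hr2, hs2, hddef]
    simp only [dot3, Fin.sum_univ_three]
    ring
  rw [hL, hR]
  have hu : d = (d / (r*s)) * (r*s) := by field_simp
  set u := d / (r*s) with hudef
  have key : 2*(r*p)*(s*q)*d^2 / (r^2*s^2) = 2*r*p*s*q*u^2 := by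
    rw [hudef]
    field_simp
  rw [key, hu]
  nlinarith [mul_nonneg (mul_nonneg (mul_nonneg (mul_nonneg hr.le hp.le) hs.le) hq.le)
    (sq_nonneg (u - 1)), mul_pos (mul_pos (mul_pos hr hp) hs) hq]
end

section
/- For each p > 0 and ε ≥ 0 there exists a constant C > 0 such that for all v, w, y ∈ ℝ³: c_{p,ε}(v,y) ≤ C(c_{p,ε}(v,w) + c_{p,ε}(w,y)), where c_{p,ε}(v,ṽ) = (1 + |v|^p + |ṽ|^p)·φ_ε(|v - ṽ|²) and φ_ε(r) = r/(1+εr). -/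
noncomputable def cost (p ε : ℝ) (v w : Fin 3 → ℝ) : ℝ :=
  (1 + norm3 v ^ p + norm3 w ^ p) * (norm3 (v - w) ^ 2 / (1 + ε * norm3 (v - w) ^ 2))

lemma norm3_eq (x : Fin 3 → ℝ) : norm3 x = ‖(WithLp.equiv 2 (Fin 3 → ℝ)).symm x‖ := by
  simp [norm3, EuclideanSpace.norm_eq, sq_abs]

lemma norm3_nonneg (x : Fin 3 → ℝ) : 0 ≤ norm3 x := Real.sqrt_nonneg _

lemma norm3_add (x y : Fin 3 → ℝ) : norm3 (x + y) ≤ norm3 x + norm3 y := by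
  simp only [norm3_eq, WithLp.equiv_symm_apply, WithLp.toLp_add]; exact norm_add_le _ _

lemma norm3_sub_comm (x y : Fin 3 → ℝ) : norm3 (x - y) = norm3 (y - x) := by
  unfold norm3; congr 1; exact Finset.sum_congr rfl fun i _ => by
    simp only [Pi.sub_apply]; ring

lemma cost_symm (p ε : ℝ) (v w : Fin 3 → ℝ) : cost p ε v w = cost p ε w v := by
  unfold cost; rw [norm3_sub_comm]; ring

lemma cost_nonneg (p ε : ℝ) (hε : 0 ≤ ε) (v w : Fin 3 → ℝ) : 0 ≤ cost p ε v w := by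
  unfold cost
  have h1 : (0:ℝ) < 1 + ε * norm3 (v - w) ^ 2 := by
    have := sq_nonneg (norm3 (v - w))
    nlinarith [mul_nonneg hε (sq_nonneg (norm3 (v - w)))]
  apply mul_nonneg
  · have := Real.rpow_nonneg (norm3_nonneg v) p
    have := Real.rpow_nonneg (norm3_nonneg w) p
    linarith
  · exact div_nonneg (sq_nonneg _) h1.le

set_option maxHeartbeats 1000000 in
lemma key (p ε : ℝ) (hp : 0 < p) (hε : 0 ≤ ε) (v w y : Fin 3 → ℝ)
    (hba : norm3 (w - y) ≤ norm3 (v - w)) :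
    cost p ε v y ≤ (4 + 4 * 3 ^ p) * cost p ε v w := by
  set U := norm3 v with hU
  set W := norm3 w with hW
  set Y := norm3 y with hY
  set a := norm3 (v - w) with ha
  set b := norm3 (w - y) with hb
  set c := norm3 (v - y) with hc
  have hU0 : 0 ≤ U := norm3_nonneg v
  have hW0 : 0 ≤ W := norm3_nonneg w
  have hY0 : 0 ≤ Y := norm3_nonneg y
  have ha0 : 0 ≤ a := norm3_nonneg _
  have hb0 : 0 ≤ b := norm3_nonneg _
  have hc0 : 0 ≤ c := norm3_nonneg _
  -- triangle inequalities
  have htri : c ≤ a + b := by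
    have := norm3_add (v - w) (w - y)
    simpa [sub_add_sub_cancel] using this
  have haU : a ≤ U + W := by
    have := norm3_add v (-w)
    have hnw : norm3 (-w) = W := by
      rw [hW]; unfold norm3; congr 1
      exact Finset.sum_congr rfl fun i _ => by simp [neg_sq]
    rw [ha, hU, sub_eq_add_neg]; rw [hnw] at this; exact this
  have hYW : Y ≤ W + b := by
    have := norm3_add w (y - w)
    have h1 : w + (y - w) = y := by ring
    rw [h1] at this
    rw [norm3_sub_comm y w] at this
    exact this
  -- φ bound
  have hden_c : (0:ℝ) < 1 + ε * c ^ 2 := by positivity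
  have hden_a : (0:ℝ) < 1 + ε * a ^ 2 := by positivity
  have hcc : c ^ 2 ≤ 4 * a ^ 2 := by nlinarith
  have hphi : c ^ 2 / (1 + ε * c ^ 2) ≤ 4 * (a ^ 2 / (1 + ε * a ^ 2)) := by
    rw [div_le_iff₀ hden_c]
    have h4 : 4 * (a ^ 2 / (1 + ε * a ^ 2)) = (4 * a ^ 2) / (1 + ε * a ^ 2) := by ring
    rw [h4, div_mul_eq_mul_div, le_div_iff₀ hden_a]
    nlinarith [mul_nonneg (mul_nonneg hε (sq_nonneg a)) (sq_nonneg c)]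
  -- Y^p bound
  have hYmax : Y ≤ 3 * max U W := by
    have h1 : Y ≤ U + 2 * W := by linarith
    have h2 : U ≤ max U W := le_max_left _ _
    have h3 : W ≤ max U W := le_max_right _ _
    linarith
  have hYp : Y ^ p ≤ 3 ^ p * (U ^ p + W ^ p) := by
    have h1 : Y ^ p ≤ (3 * max U W) ^ p :=
      Real.rpow_le_rpow hY0 hYmax hp.le
    have h2 : (3 * max U W) ^ p = 3 ^ p * (max U W) ^ p :=
      Real.mul_rpow (by norm_num) (le_trans hU0 (le_max_left _ _))
    have h3 : (max U W) ^ p ≤ U ^ p + W ^ p := by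
      rcases max_cases U W with ⟨h, _⟩ | ⟨h, _⟩ <;> rw [h]
      · nlinarith [Real.rpow_nonneg hW0 p]
      · nlinarith [Real.rpow_nonneg hU0 p]
    calc Y ^ p ≤ 3 ^ p * (max U W) ^ p := by rw [← h2]; exact h1
      _ ≤ 3 ^ p * (U ^ p + W ^ p) := by
          have : (0:ℝ) < 3 ^ p := Real.rpow_pos_of_pos (by norm_num) p
          nlinarith
  -- combine
  unfold cost
  rw [← hU, ← hW, ← hY, ← ha, ← hc]
  have hUp : 0 ≤ U ^ p := Real.rpow_nonneg hU0 p
  have hWp : 0 ≤ W ^ p := Real.rpow_nonneg hW0 p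
  have hYp0 : 0 ≤ Y ^ p := Real.rpow_nonneg hY0 p
  have h3p : (0:ℝ) < 3 ^ p := Real.rpow_pos_of_pos (by norm_num) p
  have hphia : 0 ≤ a ^ 2 / (1 + ε * a ^ 2) := by positivity
  have hphic : 0 ≤ c ^ 2 / (1 + ε * c ^ 2) := by positivity
  have h4phia : (0:ℝ) ≤ 4 * (a ^ 2 / (1 + ε * a ^ 2)) := by linarith
  calc (1 + U ^ p + Y ^ p) * (c ^ 2 / (1 + ε * c ^ 2))
      ≤ (1 + U ^ p + Y ^ p) * (4 * (a ^ 2 / (1 + ε * a ^ 2))) :=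
        mul_le_mul_of_nonneg_left hphi (by linarith)
    _ ≤ (1 + U ^ p + 3 ^ p * (U ^ p + W ^ p)) * (4 * (a ^ 2 / (1 + ε * a ^ 2))) :=
        mul_le_mul_of_nonneg_right (by linarith) h4phia
    _ ≤ (4 + 4 * 3 ^ p) * ((1 + U ^ p + W ^ p) * (a ^ 2 / (1 + ε * a ^ 2))) := by
        nlinarith [mul_nonneg h3p.le hphia, mul_nonneg hWp hphia,
          mul_nonneg (mul_nonneg h3p.le hWp) hphia]

theorem stmt9 (p ε : ℝ) (hp : 0 < p) (hε : 0 ≤ ε) :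
    ∃ C > (0:ℝ), ∀ v w y : Fin 3 → ℝ,
      cost p ε v y ≤ C * (cost p ε v w + cost p ε w y) := by
  have h3p : (0:ℝ) < 3 ^ p := Real.rpow_pos_of_pos (by norm_num) p
  refine ⟨4 + 4 * 3 ^ p, by linarith, fun v w y => ?_⟩
  rcases le_total (norm3 (w - y)) (norm3 (v - w)) with h | h
  · have := key p ε hp hε v w y h
    have h2 := cost_nonneg p ε hε w y
    nlinarith
  · have h' : norm3 (w - v) ≤ norm3 (y - w) := by
      rw [norm3_sub_comm w v, norm3_sub_comm y w]; exact h
    have := key p ε hp hε y w v h'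
    rw [cost_symm p ε y v, cost_symm p ε y w] at this
    have h2 := cost_nonneg p ε hε v w
    nlinarith
end

section
/- Let u : (0,∞) → (0,∞) be C¹ and suppose there are constants a, b, c, α, β > 0 such that u'(t) ≤ -a·u(t)^{1+α} + b·u(t) + c·u(t)^{1-β} for all t > 0. Then for all t > 0, u(t) ≤ (2/(aαt))^{1/α} + (4b/a)^{1/α} + (4c/a)^{1/(α+β)}. -/
open Real Set Filter Topology

/-- Comparison lemma: if `u' ≤ -(a/2) u^{1+α}` whenever `u ≥ M`, then
`u t₀ ≤ (2/(aα))^{1/α} (t₀-ε)^{-1/α} + M` for `0 < ε < t₀`. -/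
lemma aux12 (u u' : ℝ → ℝ) (a α M : ℝ)
    (ha : 0 < a) (hα : 0 < α) (hM : 0 < M)
    (hderiv : ∀ t > (0:ℝ), HasDerivAt u (u' t) t)
    (hkey : ∀ s > (0:ℝ), M ≤ u s → u' s ≤ -(a/2) * u s ^ (1+α))
    {ε t₀ : ℝ} (hε : 0 < ε) (ht : ε < t₀) :
    u t₀ ≤ (2/(a*α))^(1/α) * (t₀ - ε)^(-(1/α)) + M := by
  by_contra hcon
  push_neg at hcon
  have haα : 0 < a * α := mul_pos ha hα
  set C : ℝ := (2/(a*α)) ^ (1/α) with hC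
  have hCpos : 0 < C := rpow_pos_of_pos (by positivity) _
  set p : ℝ := -(1/α) with hp
  set ψ : ℝ → ℝ := fun s => C * (s - ε) ^ p with hψ
  set φ : ℝ → ℝ := fun s => ψ s + M with hφ
  have hψpos : ∀ s, ε < s → 0 < ψ s := fun s hs =>
    mul_pos hCpos (rpow_pos_of_pos (by linarith) _)
  -- derivative of φ
  have hφderiv : ∀ s, ε < s → HasDerivAt φ (-(a/2) * ψ s ^ (1+α)) s := by
    intro s hs
    have hy : (0:ℝ) < s - ε := by linarith
    have h1 : HasDerivAt (fun s : ℝ => s - ε) 1 s := (hasDerivAt_id s).sub_const ε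
    have h2 : HasDerivAt (fun s : ℝ => (s - ε) ^ p) (1 * p * (s - ε) ^ (p - 1)) s :=
      h1.rpow_const (Or.inl hy.ne')
    have h3 : HasDerivAt φ (C * (1 * p * (s - ε) ^ (p - 1))) s :=
      (h2.const_mul C).add_const M
    convert h3 using 1
    have hCα : C ^ α = 2/(a*α) := by
      rw [hC, ← rpow_mul (by positivity), one_div, inv_mul_cancel₀ hα.ne', rpow_one]
    have hψval : ψ s ^ (1+α) = C^(1+α) * (s-ε)^(p*(1+α)) := by
      rw [hψ]
      rw [mul_rpow hCpos.le (rpow_pos_of_pos hy _).le, ← rpow_mul hy.le]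
    have hexp : p * (1+α) = p - 1 := by
      rw [hp]; field_simp; ring
    rw [hψval, rpow_add hCpos, rpow_one, hCα, hexp, hp]
    field_simp
  -- near ε⁺, u < φ since φ blows up
  have htend : Tendsto φ (𝓝[>] ε) atTop := by
    have h1 : Tendsto (fun s : ℝ => s - ε) (𝓝[>] ε) (𝓝[>] 0) := by
      apply tendsto_nhdsWithin_of_tendsto_nhds_of_eventually_within
      · have : Tendsto (fun s : ℝ => s - ε) (𝓝 ε) (𝓝 (ε - ε)) :=
          (continuous_id.sub continuous_const).continuousAt
        simpa using this.mono_left nhdsWithin_le_nhds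
      · exact eventually_of_mem self_mem_nhdsWithin fun s hs => mem_Ioi.2 (sub_pos.2 hs)
    have h2a : Tendsto (fun y : ℝ => y ^ (1/α)) (𝓝[>] (0:ℝ)) (𝓝[>] (0:ℝ)) := by
      apply tendsto_nhdsWithin_of_tendsto_nhds_of_eventually_within
      · have : ContinuousAt (fun y : ℝ => y ^ (1/α)) 0 :=
          Real.continuousAt_rpow_const 0 (1/α) (Or.inr (by positivity))
        have h0 : (0:ℝ) ^ (1/α) = 0 := Real.zero_rpow (by positivity)
        have := this.tendsto.mono_left (nhdsWithin_le_nhds (s := Ioi (0:ℝ)))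
        simpa only [h0] using this
      · exact eventually_of_mem self_mem_nhdsWithin fun y hy => rpow_pos_of_pos hy _
    have h2 : Tendsto (fun y : ℝ => y ^ p) (𝓝[>] (0:ℝ)) atTop := by
      have := tendsto_inv_nhdsGT_zero.comp h2a
      apply this.congr'
      filter_upwards [self_mem_nhdsWithin] with y (hy : (0:ℝ) < y)
      simp [Function.comp, hp, rpow_neg hy.le]
    have h3 : Tendsto ψ (𝓝[>] ε) atTop := by
      have := (h2.comp h1).const_mul_atTop hCpos
      exact this.congr fun s => rfl
    exact tendsto_atTop_add_const_right _ M h3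
  have hub : ∀ᶠ s in 𝓝[>] ε, u s < φ s := by
    have h1 : ∀ᶠ s in 𝓝[>] ε, u ε + 1 < φ s := htend.eventually_gt_atTop _
    have h2 : ∀ᶠ s in 𝓝[>] ε, u s < u ε + 1 :=
      ((hderiv ε hε).continuousAt.tendsto.mono_left nhdsWithin_le_nhds).eventually
        (eventually_lt_nhds (by linarith))
    filter_upwards [h1, h2] with s hs1 hs2; linarith
  obtain ⟨s₁, hs₁lt, hs₁Ioo⟩ :=
    (hub.and (eventually_of_mem (Ioo_mem_nhdsGT_of_mem ⟨le_refl ε, ht⟩) (fun s hs => hs))).exists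
  -- first crossing point
  set d : ℝ → ℝ := fun s => u s - φ s with hd
  have hdcont : ∀ s, ε < s → ContinuousAt d s := fun s hs =>
    ((hderiv s (lt_trans hε hs)).continuousAt.sub (hφderiv s hs).continuousAt)
  set S : Set ℝ := Icc s₁ t₀ ∩ d ⁻¹' Ici 0 with hS
  have hScl : IsClosed S := by
    have hcd : ContinuousOn d (Icc s₁ t₀) := fun s hs =>
      (hdcont s (lt_of_lt_of_le hs₁Ioo.1 hs.1)).continuousWithinAt
    exact hcd.preimage_isClosed_of_isClosed isClosed_Icc isClosed_Ici
  have hSne : S.Nonempty := by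
    refine ⟨t₀, ⟨hs₁Ioo.2.le, le_refl _⟩, ?_⟩
    simp only [mem_preimage, mem_Ici, hd]
    have : φ t₀ = C * (t₀ - ε) ^ p + M := rfl
    rw [this, hp]
    linarith
  have hSbdd : BddBelow S := ⟨s₁, fun s hs => hs.1.1⟩
  set s' := sInf S with hs'
  have hs'S : s' ∈ S := hScl.csInf_mem hSne hSbdd
  have hs'Icc := hs'S.1
  have hds'0 : (0:ℝ) ≤ d s' := hs'S.2
  have hds₁ : d s₁ < 0 := sub_neg.mpr hs₁lt
  have hs₁lt' : s₁ < s' := by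
    rcases lt_or_eq_of_le hs'Icc.1 with h | h
    · exact h
    · exfalso; rw [← h] at hds'0; linarith
  have hεs' : ε < s' := lt_trans hs₁Ioo.1 hs₁lt'
  have hs'pos : 0 < s' := lt_trans hε hεs'
  have hlt : ∀ s, s₁ ≤ s → s < s' → d s < 0 := by
    intro s h1 h2
    by_contra hge
    push_neg at hge
    have hmem : s ∈ S := ⟨⟨h1, le_trans h2.le hs'Icc.2⟩, hge⟩
    exact absurd (csInf_le hSbdd hmem) (not_le.mpr h2)
  have hd0 : d s' = 0 := by
    have hle : d s' ≤ 0 := by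
      have htd : Tendsto d (𝓝[<] s') (𝓝 (d s')) :=
        (hdcont s' hεs').tendsto.mono_left nhdsWithin_le_nhds
      refine le_of_tendsto htd ?_
      filter_upwards [Ioo_mem_nhdsLT_of_mem ⟨hs₁lt', le_refl s'⟩] with s hs
      exact (hlt s hs.1.le hs.2).le
    linarith
  -- derivative comparison at the crossing point
  have hu' := hderiv s' hs'pos
  have hφ' := hφderiv s' hεs'
  have hus' : u s' = φ s' := by
    have : u s' - φ s' = 0 := hd0
    linarith
  have hψs' := hψpos s' hεs'
  have huM : M ≤ u s' := by
    rw [hus']; show M ≤ ψ s' + M; linarith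
  have hkey' := hkey s' hs'pos huM
  have hstrict : u' s' < -(a/2) * ψ s' ^ (1+α) := by
    have h1 : ψ s' ^ (1+α) < (ψ s' + M) ^ (1+α) :=
      rpow_lt_rpow hψs'.le (by linarith) (by linarith)
    have h2 : u s' ^ (1+α) = (ψ s' + M) ^ (1+α) := by rw [hus']
    nlinarith [hkey']
  have hdD : HasDerivAt d (u' s' - -(a/2) * ψ s' ^ (1+α)) s' := hu'.sub hφ'
  have hDneg : u' s' - -(a/2) * ψ s' ^ (1+α) < 0 := by linarith
  have hslope : Tendsto (slope d s') (𝓝[<] s') (𝓝 (u' s' - -(a/2) * ψ s' ^ (1+α))) :=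
    (hasDerivAt_iff_tendsto_slope.mp hdD).mono_left
      (nhdsWithin_mono _ fun x hx => ne_of_lt hx)
  have hev1 : ∀ᶠ s in 𝓝[<] s', slope d s' s < 0 := hslope.eventually (gt_mem_nhds hDneg)
  have hev2 : Ioo s₁ s' ∈ 𝓝[<] s' := Ioo_mem_nhdsLT_of_mem ⟨hs₁lt', le_refl s'⟩
  obtain ⟨s, hsneg, hsIoo⟩ :=
    (hev1.and (eventually_of_mem hev2 (fun s hs => hs))).exists
  have hds : d s < 0 := hlt s hsIoo.1.le hsIoo.2
  have hpos' : 0 < slope d s' s := by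
    rw [slope_def_field, hd0]
    have h1 : d s - 0 < 0 := by linarith
    have h2 : s - s' < 0 := by linarith [hsIoo.2]
    exact div_pos_of_neg_of_neg h1 h2
  linarith

theorem stmt12 (u u' : ℝ → ℝ) (a b c α β : ℝ)
    (ha : 0 < a) (hb : 0 < b) (hc : 0 < c) (hα : 0 < α) (hβ : 0 < β)
    (hpos : ∀ t > (0:ℝ), 0 < u t)
    (hderiv : ∀ t > (0:ℝ), HasDerivAt u (u' t) t)
    (hcont : ContinuousOn u' (Set.Ioi 0))
    (hineq : ∀ t > (0:ℝ), u' t ≤ -a * u t ^ (1 + α) + b * u t + c * u t ^ (1 - β)) :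
    ∀ t > (0:ℝ), u t ≤ (2 / (a * α * t)) ^ (1/α) + (4*b/a) ^ (1/α) + (4*c/a) ^ (1/(α+β)) := by
  intro t ht
  set M₁ : ℝ := (4*b/a) ^ (1/α) with hM₁def
  set M₂ : ℝ := (4*c/a) ^ (1/(α+β)) with hM₂def
  have hM₁ : 0 < M₁ := rpow_pos_of_pos (by positivity) _
  have hM₂ : 0 < M₂ := rpow_pos_of_pos (by positivity) _
  set M : ℝ := M₁ + M₂ with hMdef
  have hM : 0 < M := by positivity
  have hkey : ∀ s > (0:ℝ), M ≤ u s → u' s ≤ -(a/2) * u s ^ (1+α) := by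
    intro s hs hMs
    have hx : 0 < u s := hpos s hs
    set x := u s with hxdef
    have hxM₁ : M₁ ≤ x := le_trans (le_add_of_nonneg_right hM₂.le) hMs
    have hxM₂ : M₂ ≤ x := le_trans (le_add_of_nonneg_left hM₁.le) hMs
    have e1 : M₁ ^ α = 4*b/a := by
      rw [hM₁def, ← rpow_mul (by positivity), one_div, inv_mul_cancel₀ hα.ne', rpow_one]
    have e2 : M₂ ^ (α+β) = 4*c/a := by
      rw [hM₂def, ← rpow_mul (by positivity), one_div,
        inv_mul_cancel₀ (by positivity : α + β ≠ 0), rpow_one]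
    have h1 : 4*b/a ≤ x ^ α := e1 ▸ rpow_le_rpow hM₁.le hxM₁ hα.le
    have h2 : 4*c/a ≤ x ^ (α+β) := e2 ▸ rpow_le_rpow hM₂.le hxM₂ (by positivity)
    have hb' : b * x ≤ a/4 * x ^ (1+α) := by
      have hsplit : x ^ (1+α) = x * x ^ α := by rw [rpow_add hx, rpow_one]
      have hba : b ≤ a/4 * x ^ α := by
        have : a/4 * (4*b/a) = b := by field_simp
        nlinarith
      rw [hsplit]
      nlinarith [hx.le]
    have hc' : c * x ^ (1-β) ≤ a/4 * x ^ (1+α) := by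
      have hsplit : x ^ (1+α) = x ^ (1-β) * x ^ (α+β) := by
        rw [← rpow_add hx]; ring_nf
      have hxb : 0 < x ^ (1-β) := rpow_pos_of_pos hx _
      have hca : c ≤ a/4 * x ^ (α+β) := by
        have : a/4 * (4*c/a) = c := by field_simp
        nlinarith
      rw [hsplit]
      nlinarith
    have h3 := hineq s hs
    nlinarith [h3, hb', hc']
  have haux : ∀ ε ∈ Ioo (0:ℝ) t, u t ≤ (2/(a*α))^(1/α) * (t - ε)^(-(1/α)) + M :=
    fun ε hε => aux12 u u' a α M ha hα hM hderiv hkey hε.1 hε.2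
  have htend : Tendsto (fun ε : ℝ => (2/(a*α))^(1/α) * (t - ε)^(-(1/α)) + M) (𝓝[>] 0)
      (𝓝 ((2/(a*α))^(1/α) * t^(-(1/α)) + M)) := by
    have h1 : ContinuousAt (fun ε : ℝ => t - ε) 0 :=
      (continuous_const.sub continuous_id).continuousAt
    have h2 : ContinuousAt (fun y : ℝ => y ^ (-(1/α))) ((fun ε : ℝ => t - ε) 0) := by
      simpa using Real.continuousAt_rpow_const t _ (Or.inl ht.ne')
    have h3 : ContinuousAt (fun ε : ℝ => (t - ε) ^ (-(1/α))) 0 := h2.comp h1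
    have h4 : ContinuousAt (fun ε : ℝ => (2/(a*α))^(1/α) * (t - ε)^(-(1/α)) + M) 0 :=
      (h3.const_mul _).add continuousAt_const
    have := h4.tendsto.mono_left (nhdsWithin_le_nhds (s := Ioi (0:ℝ)))
    simpa using this
  have hle : u t ≤ (2/(a*α))^(1/α) * t^(-(1/α)) + M := by
    refine ge_of_tendsto htend ?_
    filter_upwards [Ioo_mem_nhdsGT_of_mem ⟨le_refl (0:ℝ), ht⟩] with ε hε
    exact haux ε hε
  have heq : (2/(a*α))^(1/α) * t^(-(1/α)) = (2/(a*α*t))^(1/α) := by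
    rw [rpow_neg ht.le, ← inv_rpow ht.le,
      ← mul_rpow (by positivity) (by positivity)]
    congr 1
    field_simp
  rw [heq] at hle
  linarith
end

section
/- For all nonzero x, x̃ ∈ ℝ³, the quantity g₁ := (x - x̃)·(b(x) - b(x̃)) + ‖σ(x) - σ(x̃)‖² satisfies g₁ ≤ 2(x·x̃)(|x|^{γ/2} - |x̃|^{γ/2})² ≤ 2·min(|x|,|x̃|)^γ · |x - x̃|². -/
set_option maxHeartbeats 3000000 in
lemma frob2_sigma_sub (γ : ℝ) (x y : Fin 3 → ℝ) (hx : (0:ℝ) < ∑ i, x i^2)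
    (hy : (0:ℝ) < ∑ i, y i^2) :
    frob2 (sigmaM γ x - sigmaM γ y)
      = 2 * (norm3 x ^ (1+γ/2))^2 + 2 * (norm3 y ^ (1+γ/2))^2
        - 2 * (norm3 x ^ (1+γ/2)) * (norm3 y ^ (1+γ/2))
        - 2 * (norm3 x ^ (1+γ/2)) * (norm3 y ^ (1+γ/2)) * (dot3 x y)^2
            * ((∑ i, x i^2) * (∑ i, y i^2))⁻¹ := by
  have hx2 : norm3 x ^ 2 = ∑ i, x i^2 := Real.sq_sqrt (by positivity)
  have hy2 : norm3 y ^ 2 = ∑ i, y i^2 := Real.sq_sqrt (by positivity)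
  have hx' : (0:ℝ) < x 0^2 + x 1^2 + x 2^2 := by simpa [Fin.sum_univ_three] using hx
  have hy' : (0:ℝ) < y 0^2 + y 1^2 + y 2^2 := by simpa [Fin.sum_univ_three] using hy
  simp only [frob2, sigmaM, projM, dot3, Matrix.trace, Matrix.diag, Matrix.mul_apply,
    Matrix.transpose_apply, Matrix.sub_apply, Matrix.smul_apply, Matrix.of_apply,
    Matrix.one_apply, smul_eq_mul, Fin.sum_univ_three, hx2, hy2,
    Fin.ext_iff, Fin.val_zero, Fin.val_one, Fin.val_two]
  norm_num
  field_simp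
  ring

lemma drift_sub (γ : ℝ) (x y : Fin 3 → ℝ) :
    dot3 (x - y) (bfun γ x - bfun γ y)
      = -2 * norm3 x ^ γ * (∑ i, x i^2) - 2 * norm3 y ^ γ * (∑ i, y i^2)
        + 2 * (norm3 x ^ γ + norm3 y ^ γ) * dot3 x y := by
  simp only [dot3, bfun, Pi.sub_apply, Pi.smul_apply, smul_eq_mul, Fin.sum_univ_three]
  ring

lemma normsq_pos (x : Fin 3 → ℝ) (hx : x ≠ 0) : (0:ℝ) < ∑ i, x i^2 := by
  obtain ⟨i, hi⟩ := Function.ne_iff.mp hx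
  have hi' : x i ≠ 0 := by simpa using hi
  refine Finset.sum_pos' (fun j _ => sq_nonneg _) ⟨i, Finset.mem_univ i, ?_⟩
  calc (0:ℝ) < |x i|^2 := pow_pos (abs_pos.mpr hi') 2
    _ = x i ^ 2 := sq_abs _

/-- key scalar inequality for part 2 -/
lemma aux2 (γ r s c : ℝ) (hγ0 : 0 < γ) (hγ1 : γ ≤ 1) (hs : 0 < s) (hsr : s ≤ r)
    (hc : c ≤ r * s) :
    2 * c * (r ^ (γ/2) - s ^ (γ/2))^2 ≤ 2 * s ^ γ * (r^2 + s^2 - 2*c) := by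
  have hr : 0 < r := lt_of_lt_of_le hs hsr
  set A := r ^ (γ/2) with hA
  set B := s ^ (γ/2) with hB
  have hApos : 0 < A := Real.rpow_pos_of_pos hr _
  have hBpos : 0 < B := Real.rpow_pos_of_pos hs _
  have hBA : B ≤ A := Real.rpow_le_rpow hs.le hsr (by positivity)
  have hsγ : s ^ γ = B^2 := by
    rw [hB, ← Real.rpow_natCast (s ^ (γ/2)) 2, ← Real.rpow_mul hs.le]
    norm_num
  -- key: r*s*(A-B)^2 ≤ B^2*(r-s)^2
  have key : r * s * (A - B)^2 ≤ B^2 * (r - s)^2 := by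
    set w := r ^ ((1:ℝ)/2) with hw
    set v := s ^ ((1:ℝ)/2) with hv
    have hwpos : 0 < w := Real.rpow_pos_of_pos hr _
    have hvpos : 0 < v := Real.rpow_pos_of_pos hs _
    have hw2 : w^2 = r := by
      rw [hw, ← Real.rpow_natCast (r ^ ((1:ℝ)/2)) 2, ← Real.rpow_mul hr.le]; norm_num
    have hv2 : v^2 = s := by
      rw [hv, ← Real.rpow_natCast (s ^ ((1:ℝ)/2)) 2, ← Real.rpow_mul hs.le]; norm_num
    have hvw : v ≤ w := Real.rpow_le_rpow hs.le hsr (by norm_num)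
    -- claim1 : w * v * A ≤ B * r
    have claim1 : w * v * A ≤ B * r := by
      have e1 : w * A = r ^ ((1+γ)/2) := by
        rw [hw, hA, ← Real.rpow_add hr]; ring_nf
      have e2 : v = B * s ^ ((1-γ)/2) := by
        rw [hv, hB, ← Real.rpow_add hs]; ring_nf
      have e3 : r ^ ((1+γ)/2) * r ^ ((1-γ)/2) = r := by
        rw [← Real.rpow_add hr]; ring_nf; exact Real.rpow_one r
      have h4 : s ^ ((1-γ)/2) ≤ r ^ ((1-γ)/2) :=
        Real.rpow_le_rpow hs.le hsr (by linarith)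
      calc w * v * A = r ^ ((1+γ)/2) * s ^ ((1-γ)/2) * B := by
            rw [e2, ← e1]; ring
        _ ≤ r ^ ((1+γ)/2) * r ^ ((1-γ)/2) * B := by
            have := mul_le_mul_of_nonneg_left h4 (le_of_lt (Real.rpow_pos_of_pos hr ((1+γ)/2)))
            exact mul_le_mul_of_nonneg_right this hBpos.le
        _ = B * r := by rw [e3]; ring
    -- claim2 : B * s ≤ w * v * B
    have claim2 : B * s ≤ w * v * B := by
      have : s ≤ w * v := by
        calc s = v * v := by rw [← hv2]; ring
          _ ≤ w * v := mul_le_mul_of_nonneg_right hvw hvpos.le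
      nlinarith [hBpos]
    have hL : w * v * (A - B) ≤ B * (r - s) := by nlinarith [claim1, claim2]
    have hLnn : 0 ≤ w * v * (A - B) :=
      mul_nonneg (by positivity) (sub_nonneg.mpr hBA)
    have hsq := mul_self_le_mul_self hLnn hL
    have e5 : (w * v * (A - B)) * (w * v * (A - B)) = r * s * (A - B)^2 := by
      rw [← hw2, ← hv2]; ring
    have e6 : (B * (r - s)) * (B * (r - s)) = B^2 * (r - s)^2 := by ring
    linarith [hsq, e5, e6]
  have h1 : c * (A - B)^2 ≤ r * s * (A - B)^2 :=
    mul_le_mul_of_nonneg_right hc (sq_nonneg _)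
  have h3 : B^2 * c ≤ B^2 * (r * s) := mul_le_mul_of_nonneg_left hc (sq_nonneg _)
  rw [hsγ]
  nlinarith [h1, h3, key]

set_option maxHeartbeats 4000000 in
theorem stmt16 (γ : ℝ) (hγ : γ ∈ Set.Ioc (0:ℝ) 1) (x y : Fin 3 → ℝ) (hx : x ≠ 0) (hy : y ≠ 0) :
    dot3 (x - y) (bfun γ x - bfun γ y) + frob2 (sigmaM γ x - sigmaM γ y)
        ≤ 2 * dot3 x y * (norm3 x ^ (γ/2) - norm3 y ^ (γ/2))^2
    ∧ 2 * dot3 x y * (norm3 x ^ (γ/2) - norm3 y ^ (γ/2))^2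
        ≤ 2 * min (norm3 x) (norm3 y) ^ γ * norm3 (x - y) ^ 2 := by
  obtain ⟨hγ0, hγ1⟩ := hγ
  have hSx : (0:ℝ) < ∑ i, x i^2 := normsq_pos x hx
  have hSy : (0:ℝ) < ∑ i, y i^2 := normsq_pos y hy
  set r := norm3 x with hrdef
  set s := norm3 y with hsdef
  set c := dot3 x y with hcdef
  have hr : 0 < r := Real.sqrt_pos.mpr hSx
  have hs : 0 < s := Real.sqrt_pos.mpr hSy
  have hr2 : r^2 = ∑ i, x i^2 := Real.sq_sqrt (by positivity)
  have hs2 : s^2 = ∑ i, y i^2 := Real.sq_sqrt (by positivity)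
  set A := r ^ (γ/2) with hA
  set B := s ^ (γ/2) with hB
  have hApos : 0 < A := Real.rpow_pos_of_pos hr _
  have hBpos : 0 < B := Real.rpow_pos_of_pos hs _
  have hrγ : r ^ γ = A^2 := by
    rw [hA, ← Real.rpow_natCast (r ^ (γ/2)) 2, ← Real.rpow_mul hr.le]; norm_num
  have hsγ : s ^ γ = B^2 := by
    rw [hB, ← Real.rpow_natCast (s ^ (γ/2)) 2, ← Real.rpow_mul hs.le]; norm_num
  have hR : r ^ (1 + γ/2) = r * A := by
    rw [hA, Real.rpow_add hr, Real.rpow_one]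
  have hS : s ^ (1 + γ/2) = s * B := by
    rw [hB, Real.rpow_add hs, Real.rpow_one]
  -- Cauchy-Schwarz
  have hcs2 : c^2 ≤ (∑ i, x i^2) * (∑ i, y i^2) := by
    have := Finset.sum_mul_sq_le_sq_mul_sq Finset.univ x y
    simpa [hcdef, dot3] using this
  have hc : c ≤ r * s := by
    nlinarith [hcs2, hr2, hs2, mul_pos hr hs]
  -- norm of difference
  have hdiff : norm3 (x - y) ^ 2 = r^2 + s^2 - 2*c := by
    have h0 : norm3 (x - y) ^ 2 = ∑ i, ((x - y) i)^2 := Real.sq_sqrt (by positivity)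
    rw [h0, hr2, hs2, hcdef]
    simp only [dot3, Fin.sum_univ_three, Pi.sub_apply]
    ring
  constructor
  · -- part 1
    rw [drift_sub, frob2_sigma_sub γ x y hSx hSy, ← hrdef, ← hsdef, ← hcdef,
      ← hr2, ← hs2, hrγ, hsγ, hR, hS]
    have hsub : 2 * c * (A - B)^2 -
        ((-2) * A^2 * r^2 - 2 * B^2 * s^2 + 2 * (A^2 + B^2) * c
          + (2 * (r*A)^2 + 2 * (s*B)^2 - 2 * (r*A) * (s*B)
            - 2 * (r*A) * (s*B) * c^2 * (r^2 * s^2)⁻¹))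
        = 2 * A * B * (r*s)⁻¹ * (r*s - c)^2 := by
      field_simp
      ring
    nlinarith [hsub, mul_pos hApos hBpos, mul_pos hr hs,
      mul_nonneg (mul_nonneg (mul_nonneg (by norm_num : (0:ℝ) ≤ 2) hApos.le)
        (mul_nonneg hBpos.le (inv_nonneg.mpr (mul_pos hr hs).le))) (sq_nonneg (r*s - c))]
  · -- part 2
    rw [hdiff]
    rcases le_total s r with hsr | hrs
    · rw [min_eq_right hsr]
      exact aux2 γ r s c hγ0 hγ1 hs hsr hc
    · rw [min_eq_left hrs]
      have := aux2 γ s r c hγ0 hγ1 hr hrs (by linarith [hc])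
      have hsq : (A - B)^2 = (B - A)^2 := by ring
      rw [hsq]
      linarith [this]
end

section
/- For all nonzero x, x̃, and all v, ṽ, v*, ṽ* ∈ ℝ³ with x = v - v* and x̃ = ṽ - ṽ*: (v - ṽ)·(b(x) - b(x̃)) ≤ 2(|x|^γ + |x̃|^γ)|v - ṽ||v* - ṽ*|, where b(x) = -2|x|^γ x. -/
noncomputable def toE3 (z : Fin 3 → ℝ) : EuclideanSpace ℝ (Fin 3) := WithLp.toLp 2 z

lemma norm3_eq_s17 (z : Fin 3 → ℝ) : norm3 z = ‖toE3 z‖ := by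
  rw [EuclideanSpace.norm_eq]
  simp [norm3, toE3, Real.norm_eq_abs, sq_abs]

lemma dot3_eq (z y : Fin 3 → ℝ) : dot3 z y = inner ℝ (toE3 z) (toE3 y) := by
  simp [dot3, toE3, PiLp.inner_apply, RCLike.inner_apply, conj_trivial, mul_comm]

lemma rpow_cross {γ r s : ℝ} (hγ0 : 0 < γ) (hγ1 : γ ≤ 1) (hr : 0 < r) (hs : 0 < s)
    (hrs : r ≤ s) : r * s ^ γ ≤ s * r ^ γ := by
  have h1 : r ^ (1 - γ) ≤ s ^ (1 - γ) := Real.rpow_le_rpow hr.le hrs (by linarith)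
  have hr' : r = r ^ (1 - γ) * r ^ γ := by
    rw [← Real.rpow_add hr]; norm_num
  have hs' : s = s ^ (1 - γ) * s ^ γ := by
    rw [← Real.rpow_add hs]; norm_num
  have hrγ : (0:ℝ) ≤ r ^ γ := (Real.rpow_pos_of_pos hr γ).le
  have hsγ : (0:ℝ) ≤ s ^ γ := (Real.rpow_pos_of_pos hs γ).le
  have e1 : r * s ^ γ = r ^ (1 - γ) * (r ^ γ * s ^ γ) := by
    conv_lhs => rw [hr']
    ring
  have e2 : s ^ (1 - γ) * (r ^ γ * s ^ γ) = s * r ^ γ := by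
    conv_rhs => rw [hs']
    ring
  rw [e1, ← e2]
  exact mul_le_mul_of_nonneg_right h1 (by positivity)

lemma abs_rpow_diff {γ r s : ℝ} (hγ0 : 0 < γ) (hγ1 : γ ≤ 1) (hr : 0 < r) (hs : 0 < s) :
    |s ^ γ - r ^ γ| * (s + r) ≤ (s ^ γ + r ^ γ) * |s - r| := by
  rcases le_total r s with h | h
  · have h1 : r ^ γ ≤ s ^ γ := Real.rpow_le_rpow hr.le h hγ0.le
    rw [abs_of_nonneg (by linarith), abs_of_nonneg (by linarith)]
    have := rpow_cross hγ0 hγ1 hr hs h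
    nlinarith
  · have h1 : s ^ γ ≤ r ^ γ := Real.rpow_le_rpow hs.le h hγ0.le
    rw [abs_of_nonpos (by linarith), abs_of_nonpos (by linarith)]
    have := rpow_cross hγ0 hγ1 hs hr h
    nlinarith


theorem stmt17 (γ : ℝ) (hγ : γ ∈ Set.Ioc (0:ℝ) 1)
    (v w vs ws : Fin 3 → ℝ) (hx : v - vs ≠ 0) (hy : w - ws ≠ 0) :
    dot3 (v - w) (bfun γ (v - vs) - bfun γ (w - ws))
      ≤ 2 * (norm3 (v - vs) ^ γ + norm3 (w - ws) ^ γ) * norm3 (v - w) * norm3 (vs - ws) := by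
  obtain ⟨hγ0, hγ1⟩ := hγ
  set s := norm3 (v - vs) with hs_def
  set r := norm3 (w - ws) with hr_def
  set d := norm3 (v - w) with hd_def
  set e := norm3 (vs - ws) with he_def
  have hs : 0 < s := by
    rw [hs_def, norm3_eq_s17]
    exact norm_pos_iff.mpr (fun h => hx (by simpa [toE3] using congrArg WithLp.ofLp h))
  have hr : 0 < r := by
    rw [hr_def, norm3_eq_s17]
    exact norm_pos_iff.mpr (fun h => hy (by simpa [toE3] using congrArg WithLp.ofLp h))
  have hd : 0 ≤ d := by rw [hd_def, norm3_eq_s17]; exact norm_nonneg _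
  have he : 0 ≤ e := by rw [he_def, norm3_eq_s17]; exact norm_nonneg _
  have hsγ : (0:ℝ) < s ^ γ := Real.rpow_pos_of_pos hs γ
  have hrγ : (0:ℝ) < r ^ γ := Real.rpow_pos_of_pos hr γ
  -- notation
  set P := dot3 (v - w) ((v - vs) + (w - ws)) with hP_def
  set Q := dot3 (v - w) (vs - ws) with hQ_def
  -- the algebraic identity
  have key : dot3 (v - w) (bfun γ (v - vs) - bfun γ (w - ws))
      = -2 * ((s ^ γ + r ^ γ) / 2 * dot3 (v - w) (v - w)
          + (s ^ γ - r ^ γ) / 2 * P - (s ^ γ + r ^ γ) / 2 * Q) := by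
    simp only [hP_def, hQ_def, dot3, bfun, Fin.sum_univ_three, Pi.sub_apply, Pi.add_apply,
      Pi.smul_apply, smul_eq_mul, ← hs_def, ← hr_def]
    ring
  have hdd : dot3 (v - w) (v - w) = d ^ 2 := by
    rw [dot3_eq, hd_def, norm3_eq_s17, real_inner_self_eq_norm_sq]
  -- Cauchy–Schwarz bounds
  have hQb : |Q| ≤ d * e := by
    rw [hQ_def, dot3_eq, hd_def, he_def, norm3_eq_s17, norm3_eq_s17]
    exact abs_real_inner_le_norm _ _
  have hPb : |P| ≤ d * (s + r) := by
    rw [hP_def, dot3_eq, hd_def, hs_def, hr_def, norm3_eq_s17, norm3_eq_s17, norm3_eq_s17]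
    calc |inner ℝ (toE3 (v - w)) (toE3 ((v - vs) + (w - ws)))|
        ≤ ‖toE3 (v - w)‖ * ‖toE3 ((v - vs) + (w - ws))‖ := abs_real_inner_le_norm _ _
      _ ≤ ‖toE3 (v - w)‖ * (‖toE3 (v - vs)‖ + ‖toE3 (w - ws)‖) := by
          apply mul_le_mul_of_nonneg_left _ (norm_nonneg _)
          simpa [toE3] using norm_add_le (toE3 (v - vs)) (toE3 (w - ws))
  -- reverse triangle inequality: |s - r| ≤ d + e
  have hsr : |s - r| ≤ d + e := by
    rw [hs_def, hr_def, hd_def, he_def, norm3_eq_s17, norm3_eq_s17, norm3_eq_s17, norm3_eq_s17]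
    calc |‖toE3 (v - vs)‖ - ‖toE3 (w - ws)‖| ≤ ‖toE3 (v - vs) - toE3 (w - ws)‖ :=
          abs_norm_sub_norm_le _ _
      _ = ‖toE3 (v - w) + (-(toE3 (vs - ws)))‖ := by
          congr 1
          ext i
          simp [toE3]
          ring
      _ ≤ ‖toE3 (v - w)‖ + ‖toE3 (vs - ws)‖ := by
          refine le_trans (norm_add_le _ _) ?_
          rw [norm_neg]
  -- combine
  have hcross : |s ^ γ - r ^ γ| * (s + r) ≤ (s ^ γ + r ^ γ) * |s - r| :=
    abs_rpow_diff hγ0 hγ1 hr hs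
  have hmid : -((s ^ γ - r ^ γ) * P) ≤ (s ^ γ + r ^ γ) * (d + e) * d := by
    have h1 : -((s ^ γ - r ^ γ) * P) ≤ |s ^ γ - r ^ γ| * |P| := by
      rw [← abs_mul]
      exact neg_le_abs _
    have h2 : |s ^ γ - r ^ γ| * |P| ≤ |s ^ γ - r ^ γ| * (d * (s + r)) :=
      mul_le_mul_of_nonneg_left hPb (abs_nonneg _)
    have h3 : |s ^ γ - r ^ γ| * (d * (s + r)) = d * (|s ^ γ - r ^ γ| * (s + r)) := by ring
    have h4 : d * (|s ^ γ - r ^ γ| * (s + r)) ≤ d * ((s ^ γ + r ^ γ) * |s - r|) :=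
      mul_le_mul_of_nonneg_left hcross hd
    have h5 : d * ((s ^ γ + r ^ γ) * |s - r|) ≤ d * ((s ^ γ + r ^ γ) * (d + e)) := by
      apply mul_le_mul_of_nonneg_left _ hd
      exact mul_le_mul_of_nonneg_left hsr (by positivity)
    nlinarith [h1, h2, h4, h5]
  have hQ2 : (s ^ γ + r ^ γ) * Q ≤ (s ^ γ + r ^ γ) * (d * e) := by
    apply mul_le_mul_of_nonneg_left _ (by positivity)
    exact le_trans (le_abs_self _) hQb
  rw [key, hdd]
  nlinarith [hmid, hQ2, hsγ, hrγ, hd, he]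
end
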